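/- Let S and C be cancellative monoids and π : S → C a surjective monoid homomorphism admitting a good section σ, with N = π⁻¹(1). If both N and C satisfy the right Følner condition, then S satisfies the right Følner condition (hence S is right amenable). -/

import Mathlib

/-- A semigroup satisfies the right Følner condition if for every nonempty finite
`K` and every `ε > 0` there is a nonempty finite `F` with `|F·k ∖ F| ≤ ε·|F|`
for every `k ∈ K`. -/
def RightFolnerCond (S : Type*) [Mul S] [DecidableEq S] : Prop :=
  ∀ K : Finset S, K.Nonempty → ∀ ε : ℝ, 0 < ε →
    ∃ F : Finset S, F.Nonempty ∧ ∀ k ∈ K, (((F.image (· * k)) \ F).card : ℝ) ≤ ε * F.card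

/-- A section `σ` for a surjective monoid homomorphism `π` is good if
`π⁻¹(c) = N·σ(c) = σ(c)·N` for every `c`, where `N = π⁻¹(1)`. -/
def IsGoodSection {S C : Type*} [Monoid S] [Monoid C] (π : S →* C) (σ : C → S) : Prop :=
  (∀ c : C, π (σ c) = c) ∧
  ∀ c : C,
    (fun n : S => n * σ c) '' (MonoidHom.mker π : Set S) = π ⁻¹' {c} ∧
    (fun n : S => σ c * n) '' (MonoidHom.mker π : Set S) = π ⁻¹' {c}

/-- if `π : S → C` is a surjective homomorphism of cancellative monoids
admitting a good section, and both `N = π⁻¹(1)` and `C` satisfy the right Følner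
condition, then so does `S`. -/
theorem stmt13 {S C : Type*} [CancelMonoid S] [CancelMonoid C]
    [DecidableEq S] [DecidableEq C]
    (π : S →* C) (hsurj : Function.Surjective π)
    (σ : C → S) (hσ : IsGoodSection π σ)
    (hN : RightFolnerCond ↥(MonoidHom.mker π)) (hC : RightFolnerCond C) :
    RightFolnerCond S := by
  classical
  obtain ⟨hsec, hgood⟩ := hσ
  intro K hK ε hε
  obtain ⟨FC, hFCne, hFC⟩ := hC (K.image π) (hK.image π) (ε/2) (by positivity)
  have hα : ∀ c : C, ∀ k : S,
      ∃ a : ↥(MonoidHom.mker π), (a : S) * σ (c * π k) = σ c * k := by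
    intro c k
    have hmem : σ c * k ∈ π ⁻¹' {c * π k} := by
      simp [Set.mem_preimage, map_mul, hsec c]
    rw [← (hgood (c * π k)).1] at hmem
    obtain ⟨n, hn, hne⟩ := hmem
    exact ⟨⟨n, hn⟩, hne⟩
  choose α hαeq using hα
  set A : Finset ↥(MonoidHom.mker π) := (FC ×ˢ K).image (fun p => α p.1 p.2) with hA
  have hAne : A.Nonempty := (hFCne.product hK).image _
  obtain ⟨FN, hFNne, hFN⟩ := hN A hAne (ε/2) (by positivity)
  set e : ↥(MonoidHom.mker π) × C → S := fun p => (p.1 : S) * σ p.2 with he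
  have hπσ : ∀ p : ↥(MonoidHom.mker π) × C, π (e p) = p.2 := by
    intro p
    have h1 : π (p.1 : S) = 1 := MonoidHom.mem_mker.mp p.1.2
    simp [he, map_mul, hsec, h1]
  have heinj : Function.Injective e := by
    intro p q h
    have hc : p.2 = q.2 := by rw [← hπσ p, ← hπσ q, h]
    rw [he] at h
    simp only at h
    rw [hc] at h
    have hn : (p.1 : S) = q.1 := mul_right_cancel h
    exact Prod.ext (Subtype.ext hn) hc
  set F := (FN ×ˢ FC).image e with hF
  have hFcard : (F.card : ℝ) = FN.card * FC.card := by
    rw [hF, Finset.card_image_of_injective _ heinj, Finset.card_product]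
    push_cast; ring
  refine ⟨F, (hFNne.product hFCne).image e, ?_⟩
  intro k hk
  have hkey : ∀ p : ↥(MonoidHom.mker π) × C,
      e p * k = e (p.1 * α p.2 k, p.2 * π k) := by
    intro p
    simp only [he, Submonoid.coe_mul]
    rw [mul_assoc (p.1 : S), ← hαeq, ← mul_assoc]
  set Bad := (FN ×ˢ FC).filter
      (fun p => ¬(p.1 * α p.2 k ∈ FN ∧ p.2 * π k ∈ FC)) with hBad
  have hsub : (F.image (· * k)) \ F ⊆ Bad.image (fun p => e p * k) := by
    intro x hx
    rw [Finset.mem_sdiff] at hx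
    obtain ⟨hx1, hx2⟩ := hx
    rw [hF, Finset.image_image] at hx1
    obtain ⟨p, hp, rfl⟩ := Finset.mem_image.mp hx1
    refine Finset.mem_image.mpr ⟨p, ?_, rfl⟩
    rw [hBad, Finset.mem_filter]
    refine ⟨hp, fun hgoodp => hx2 ?_⟩
    show e p * k ∈ F
    rw [hkey p, hF]
    exact Finset.mem_image_of_mem e (Finset.mem_product.mpr ⟨hgoodp.1, hgoodp.2⟩)
  have hcard1 : (((F.image (· * k)) \ F).card : ℝ) ≤ Bad.card := by
    exact_mod_cast (Finset.card_le_card hsub).trans Finset.card_image_le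
  set B1 := (FN ×ˢ FC).filter (fun p => p.2 * π k ∉ FC) with hB1
  set B2 := (FN ×ˢ FC).filter (fun p => p.1 * α p.2 k ∉ FN) with hB2
  have hBadsub : Bad ⊆ B1 ∪ B2 := by
    intro p hp
    rw [hBad, Finset.mem_filter] at hp
    rw [Finset.mem_union, hB1, hB2, Finset.mem_filter, Finset.mem_filter]
    tauto
  have hB1card : (B1.card : ℝ) ≤ FN.card * (ε/2 * FC.card) := by
    have hB1eq : B1 = FN ×ˢ (FC.filter (fun c => c * π k ∉ FC)) := by
      ext p
      simp only [hB1, Finset.mem_filter, Finset.mem_product]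
      tauto
    rw [hB1eq, Finset.card_product]
    have h1 : (FC.filter (fun c => c * π k ∉ FC)).card
        ≤ ((FC.image (· * π k)) \ FC).card := by
      apply Finset.card_le_card_of_injOn (· * π k)
      · intro c hc
        rw [Finset.mem_coe, Finset.mem_filter] at hc
        exact Finset.mem_sdiff.mpr ⟨Finset.mem_image_of_mem _ hc.1, hc.2⟩
      · exact fun a _ b _ h => mul_right_cancel h
    have h2 := hFC (π k) (Finset.mem_image_of_mem π hk)
    push_cast
    calc (FN.card : ℝ) * (FC.filter (fun c => c * π k ∉ FC)).card
        ≤ FN.card * ((FC.image (· * π k)) \ FC).card := by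
          apply mul_le_mul_of_nonneg_left (by exact_mod_cast h1) (by positivity)
      _ ≤ FN.card * (ε/2 * FC.card) := by
          apply mul_le_mul_of_nonneg_left h2 (by positivity)
  have hB2card : (B2.card : ℝ) ≤ FC.card * (ε/2 * FN.card) := by
    have hsub2 : B2 ⊆ FC.biUnion (fun c =>
        (FN.filter (fun n => n * α c k ∉ FN)).image (fun n => (n, c))) := by
      intro p hp
      rw [hB2, Finset.mem_filter, Finset.mem_product] at hp
      apply Finset.mem_biUnion.mpr
      exact ⟨p.2, hp.1.2, Finset.mem_image.mpr ⟨p.1, Finset.mem_filter.mpr ⟨hp.1.1, hp.2⟩, rfl⟩⟩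
    have hc2 : B2.card ≤ ∑ c ∈ FC, (FN.filter (fun n => n * α c k ∉ FN)).card := by
      refine (Finset.card_le_card hsub2).trans ?_
      refine (Finset.card_biUnion_le).trans ?_
      exact Finset.sum_le_sum (fun c _ => Finset.card_image_le)
    have hterm : ∀ c ∈ FC, ((FN.filter (fun n => n * α c k ∉ FN)).card : ℝ)
        ≤ ε/2 * FN.card := by
      intro c hc
      have h1 : (FN.filter (fun n => n * α c k ∉ FN)).card
          ≤ ((FN.image (· * α c k)) \ FN).card := by
        apply Finset.card_le_card_of_injOn (· * α c k)
        · intro n hn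
          rw [Finset.mem_coe, Finset.mem_filter] at hn
          exact Finset.mem_sdiff.mpr ⟨Finset.mem_image_of_mem _ hn.1, hn.2⟩
        · intro a _ b _ h
          have hco : (a : S) * (α c k : S) = (b : S) * (α c k : S) := by
            exact_mod_cast congrArg Subtype.val h
          exact Subtype.ext (mul_right_cancel hco)
      have hmemA : α c k ∈ A := by
        rw [hA]
        exact Finset.mem_image.mpr ⟨(c, k), Finset.mem_product.mpr ⟨hc, hk⟩, rfl⟩
      have h2 := hFN (α c k) hmemA
      exact le_trans (by exact_mod_cast h1) h2
    calc (B2.card : ℝ) ≤ ∑ c ∈ FC, ((FN.filter (fun n => n * α c k ∉ FN)).card : ℝ) := by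
          exact_mod_cast hc2
      _ ≤ ∑ _c ∈ FC, (ε/2 * FN.card) := Finset.sum_le_sum hterm
      _ = FC.card * (ε/2 * FN.card) := by rw [Finset.sum_const, nsmul_eq_mul]
  have hBadcard : (Bad.card : ℝ) ≤ (B1.card : ℝ) + B2.card := by
    have := (Finset.card_le_card hBadsub).trans (Finset.card_union_le B1 B2)
    exact_mod_cast this
  calc (((F.image (· * k)) \ F).card : ℝ) ≤ Bad.card := hcard1
    _ ≤ (B1.card : ℝ) + B2.card := hBadcard
    _ ≤ FN.card * (ε/2 * FC.card) + FC.card * (ε/2 * FN.card) := add_le_add hB1card hB2card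
    _ = ε * (FN.card * FC.card) := by ring
    _ = ε * F.card := by rw [hFcard]
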